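/- Let F be a field, V a finite set, and M: V × V → F any matrix. For all subsets X₁, Y₁ of the row index set and X₂, Y₂ of the column index set, rk(M[X₁,X₂]) + rk(M[Y₁,Y₂]) ≥ rk(M[X₁∪Y₁, X₂∩Y₂]) + rk(M[X₁∩Y₁, X₂∪Y₂]). -/

import Mathlib

set_option maxHeartbeats 1000000
set_option synthInstance.maxHeartbeats 400000
set_option linter.unusedSectionVars false


/-- Rank (over `F`) of the submatrix of `M` with rows indexed by `X` and columns by `Y`. -/
noncomputable def rkSub {V W F : Type*} [Fintype V] [Fintype W] [Field F]
    (M : Matrix V W F) (X : Finset V) (Y : Finset W) : ℕ :=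
  (M.submatrix (fun i : X => (i : V)) (fun j : Y => (j : W))).rank

section Aux



variable {F R C : Type*} [Field F] [Fintype R] [Fintype C]

/-- Span of the columns of `M` indexed by `Y`, inside `R → F`. -/
noncomputable def colSpanAux (M : Matrix R C F) (Y : Finset C) : Submodule F (R → F) :=
  Submodule.span F ((fun j => M.transpose j) '' ↑Y)

/-- Restriction map to the coordinates in `X`. -/
noncomputable def resAux (X : Finset R) : (R → F) →ₗ[F] (X → F) :=
  LinearMap.funLeft F F (fun i : X => (i : R))

lemma mem_ker_resAux (X : Finset R) (v : R → F) :
    v ∈ LinearMap.ker (resAux (F := F) X) ↔ ∀ i ∈ X, v i = 0 := by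
  simp only [resAux, LinearMap.mem_ker, LinearMap.funLeft_apply, funext_iff]
  constructor
  · intro h i hi; exact h ⟨i, hi⟩
  · intro h i; exact h i i.2

lemma ker_resAux_union (X Y : Finset R) [DecidableEq R] :
    LinearMap.ker (resAux (F := F) (X ∪ Y)) =
      LinearMap.ker (resAux (F := F) X) ⊓ LinearMap.ker (resAux (F := F) Y) := by
  ext v
  simp only [Submodule.mem_inf, mem_ker_resAux, Finset.mem_union]
  constructor
  · intro h; exact ⟨fun i hi => h i (Or.inl hi), fun i hi => h i (Or.inr hi)⟩
  · rintro ⟨h1, h2⟩ i (hi | hi); exacts [h1 i hi, h2 i hi]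

lemma ker_resAux_inter_le (X Y : Finset R) [DecidableEq R] :
    LinearMap.ker (resAux (F := F) (X ∩ Y)) ≤
      LinearMap.ker (resAux (F := F) X) ⊔ LinearMap.ker (resAux (F := F) Y) := by
  intro v hv
  rw [mem_ker_resAux] at hv
  refine Submodule.mem_sup.mpr ⟨fun i => if i ∈ X then 0 else v i, ?_,
    fun i => if i ∈ X then v i else 0, ?_, ?_⟩
  · rw [mem_ker_resAux]; intro i hi; simp [hi]
  · rw [mem_ker_resAux]; intro i hi
    by_cases hx : i ∈ X
    · simp [hx, hv i (Finset.mem_inter.mpr ⟨hx, hi⟩)]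
    · simp [hx]
  · funext i; by_cases hx : i ∈ X <;> simp [hx]

lemma ker_resAux_inter (X Y : Finset R) [DecidableEq R] :
    LinearMap.ker (resAux (F := F) (X ∩ Y)) =
      LinearMap.ker (resAux (F := F) X) ⊔ LinearMap.ker (resAux (F := F) Y) := by
  refine le_antisymm (ker_resAux_inter_le X Y) (sup_le ?_ ?_)
  · intro v hv
    rw [mem_ker_resAux] at hv ⊢
    exact fun i hi => hv i (Finset.mem_inter.mp hi).1
  · intro v hv
    rw [mem_ker_resAux] at hv ⊢
    exact fun i hi => hv i (Finset.mem_inter.mp hi).2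

lemma colSpanAux_mono (M : Matrix R C F) {Y Y' : Finset C} (h : Y ⊆ Y') :
    colSpanAux M Y ≤ colSpanAux M Y' :=
  Submodule.span_mono (Set.image_mono (by exact_mod_cast h))

lemma colSpanAux_union (M : Matrix R C F) (Y Y' : Finset C) [DecidableEq C] :
    colSpanAux M (Y ∪ Y') = colSpanAux M Y ⊔ colSpanAux M Y' := by
  rw [colSpanAux, colSpanAux, colSpanAux, Finset.coe_union, Set.image_union,
    Submodule.span_union]

/-- Key identity: `rkSub M X Y + dim (ker res_X) = dim (colSpan Y ⊔ ker res_X)`. -/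
lemma rkSub_add_eq (M : Matrix R C F) (X : Finset R) (Y : Finset C) :
    rkSub M X Y + Module.finrank F (LinearMap.ker (resAux (F := F) X)) =
      Module.finrank F (colSpanAux M Y ⊔ LinearMap.ker (resAux (F := F) X) : Submodule F (R → F)) := by
  classical
  set ρ := resAux (F := F) X with hρ
  set K := LinearMap.ker ρ with hK
  set S := colSpanAux M Y with hS
  -- Step 1 : rkSub M X Y = finrank of the image of S under ρ
  have h1 : rkSub M X Y = Module.finrank F (Submodule.map ρ S) := by
    rw [rkSub, Matrix.rank_eq_finrank_span_cols, hS, colSpanAux, Submodule.map_span,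
      ← Set.image_comp, Set.image_eq_range]
    rfl
  -- Step 2 : map ρ S = map ρ (S ⊔ K)
  have h2 : Submodule.map ρ S = Submodule.map ρ (S ⊔ K) := by
    have hb : Submodule.map ρ (LinearMap.ker ρ) = ⊥ :=
      le_bot_iff.mp (Submodule.map_le_iff_le_comap.mpr le_rfl)
    rw [Submodule.map_sup, hK, hb, sup_bot_eq]
  -- Step 3 : rank-nullity for ρ restricted to S ⊔ K
  have h3 : Module.finrank F (Submodule.map ρ (S ⊔ K)) + Module.finrank F K = Module.finrank F (S ⊔ K : Submodule F (R → F)) := by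
    have := LinearMap.finrank_range_add_finrank_ker (ρ.domRestrict (S ⊔ K))
    rw [LinearMap.range_domRestrict] at this
    have hker : LinearMap.ker (ρ.domRestrict (S ⊔ K)) =
        Submodule.comap (S ⊔ K).subtype K := by
      ext x; simp [LinearMap.mem_ker, hK]
    rw [hker] at this
    have hle : K ≤ S ⊔ K := le_sup_right
    have heq : Module.finrank F (Submodule.comap (S ⊔ K).subtype K) = Module.finrank F K :=
      (Submodule.comapSubtypeEquivOfLe hle).finrank_eq
    rw [heq] at this
    exact this
  rw [h1, h2, h3]

end Aux

/-- Submodular inequality for the matrix rank function. -/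
theorem rank_submodular {F R C : Type*} [Field F] [Fintype R] [Fintype C]
    [DecidableEq R] [DecidableEq C]
    (M : Matrix R C F) (X₁ Y₁ : Finset R) (X₂ Y₂ : Finset C) :
    rkSub M (X₁ ∪ Y₁) (X₂ ∩ Y₂) + rkSub M (X₁ ∩ Y₁) (X₂ ∪ Y₂)
      ≤ rkSub M X₁ X₂ + rkSub M Y₁ Y₂ := by
  classical
  have hsub1 : colSpanAux M (X₂ ∩ Y₂) ⊔ LinearMap.ker (resAux (F := F) (X₁ ∪ Y₁)) ≤
      (colSpanAux M X₂ ⊔ LinearMap.ker (resAux (F := F) X₁)) ⊓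
      (colSpanAux M Y₂ ⊔ LinearMap.ker (resAux (F := F) Y₁)) := by
    rw [ker_resAux_union]
    apply sup_le
    · exact le_inf
        ((colSpanAux_mono M Finset.inter_subset_left).trans le_sup_left)
        ((colSpanAux_mono M Finset.inter_subset_right).trans le_sup_left)
    · exact inf_le_inf le_sup_right le_sup_right
  have hsub2 : colSpanAux M (X₂ ∪ Y₂) ⊔ LinearMap.ker (resAux (F := F) (X₁ ∩ Y₁)) ≤
      (colSpanAux M X₂ ⊔ LinearMap.ker (resAux (F := F) X₁)) ⊔
      (colSpanAux M Y₂ ⊔ LinearMap.ker (resAux (F := F) Y₁)) := by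
    apply sup_le
    · rw [colSpanAux_union]
      exact sup_le (le_sup_left.trans le_sup_left) (le_sup_left.trans le_sup_right)
    · exact (ker_resAux_inter_le X₁ Y₁).trans (sup_le_sup le_sup_right le_sup_right)
  have e1 := rkSub_add_eq M (X₁ ∪ Y₁) (X₂ ∩ Y₂)
  have e2 := rkSub_add_eq M (X₁ ∩ Y₁) (X₂ ∪ Y₂)
  have eA := rkSub_add_eq M X₁ X₂
  have eB := rkSub_add_eq M Y₁ Y₂
  have m1 := Submodule.finrank_mono hsub1
  have m2 := Submodule.finrank_mono hsub2
  have hfin := Submodule.finrank_sup_add_finrank_inf_eq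
    (colSpanAux M X₂ ⊔ LinearMap.ker (resAux (F := F) X₁))
    (colSpanAux M Y₂ ⊔ LinearMap.ker (resAux (F := F) Y₁))
  have hker : Module.finrank F (LinearMap.ker (resAux (F := F) (X₁ ∪ Y₁))) +
      Module.finrank F (LinearMap.ker (resAux (F := F) (X₁ ∩ Y₁))) =
      Module.finrank F (LinearMap.ker (resAux (F := F) X₁)) +
      Module.finrank F (LinearMap.ker (resAux (F := F) Y₁)) := by
    rw [ker_resAux_union, ker_resAux_inter, add_comm]
    exact Submodule.finrank_sup_add_finrank_inf_eq _ _
  omega
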